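/- arXiv:2503.10292 — 5 statements merged into one kernel-verified Lean document; each statement's English description precedes it below -/
import Mathlib

section
/- In any execution of the AlterBFT protocol in the hybrid synchronous model with n > 2f replicas of which at most f are Byzantine, every block B_k with height k ≠ 0 proposed by an honest replica in an epoch e has as its ancestors only blocks that have been certified in some epoch e' < e. -/
open Finset

/-- An execution of the AlterBFT protocol in the hybrid synchronous system model:
`n` replicas, at most `f` Byzantine (`n > 2f`), small (type S) messages between honest
replicas always delivered within `ΔS`, large (type L) messages sent at time `t`
delivered by `max t GST + ΔL`.  All protocol events are time-stamped predicates. -/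
structure AlterBFTExecution where
  /-- number of replicas -/
  n : ℕ
  /-- fault threshold -/
  f : ℕ
  /-- n > 2f -/
  n_gt : n > 2 * f
  /-- the set of Byzantine (faulty) replicas -/
  Byz : Finset (Fin n)
  /-- at most f replicas are Byzantine -/
  byz_le : Byz.card ≤ f
  /-- synchrony bound for small (type S) messages, holds at all times -/
  ΔS : ℝ
  /-- eventual bound for large (type L) messages -/
  ΔL : ℝ
  /-- global stabilization time -/
  GST : ℝ
  ΔS_pos : 0 < ΔS
  ΔL_pos : 0 < ΔL
  /-- blocks -/
  Block : Type
  /-- the previous block in the hash chain (`none` for the genesis block) -/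
  parent : Block → Option Block
  /-- height of a block in the chain -/
  height : Block → ℕ
  /-- the application-specific external validity predicate `valid()` -/
  validBlock : Block → Prop
  /-- leader of each epoch -/
  leader : ℕ → Fin n
  /-- `startsEpoch r e t`: replica `r` starts (enters) epoch `e` at time `t` -/
  startsEpoch : Fin n → ℕ → ℝ → Prop
  /-- `proposes l e B t`: `l` broadcasts the proposal (type L) carrying block `B` for epoch `e` at time `t` -/
  proposes : Fin n → ℕ → Block → ℝ → Prop
  /-- `recvProposal q e B t`: `q` receives the full proposal carrying `B` for epoch `e` at time `t` -/
  recvProposal : Fin n → ℕ → Block → ℝ → Prop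
  /-- `votesAt r e B t`: `r` signs and broadcasts (type S) a vote for block `B` in epoch `e` at time `t` -/
  votesAt : Fin n → ℕ → Block → ℝ → Prop
  /-- `sendsSilence r e t`: `r` signs and broadcasts (type S) a SILENCE message for epoch `e` at time `t` -/
  sendsSilence : Fin n → ℕ → ℝ → Prop
  /-- `hasBlockCert r e B t`: `r` holds the block certificate `C_e(B)` at time `t` -/
  hasBlockCert : Fin n → ℕ → Block → ℝ → Prop
  /-- `hasSilenceCert r e t`: `r` holds a silence certificate `C_e(SILENCE)` at time `t` -/
  hasSilenceCert : Fin n → ℕ → ℝ → Prop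
  /-- `hasEquivCert r e t`: `r` holds an equivocation certificate `C_e(EQUIV)` at time `t` -/
  hasEquivCert : Fin n → ℕ → ℝ → Prop
  /-- `locksAt r e B t`: `r` locks on `B` in epoch `e` at time `t`, setting `lockedBC := C_e(B)` -/
  locksAt : Fin n → ℕ → Block → ℝ → Prop
  /-- `lockedBCAt r t e B`: at time `t`, `r`'s variable `lockedBC` equals `C_e(B)` -/
  lockedBCAt : Fin n → ℝ → ℕ → Block → Prop
  /-- `commitsRegular r e B t`: `r` directly commits `B` in epoch `e` at time `t` by the regular commit rule -/
  commitsRegular : Fin n → ℕ → Block → ℝ → Prop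
  /-- `commitsFast r e B t`: `r` directly commits `B` in epoch `e` at time `t` by the fast commit rule -/
  commitsFast : Fin n → ℕ → Block → ℝ → Prop
  /-- `commits r B t`: `r` commits (directly or indirectly) block `B` at time `t` -/
  commits : Fin n → Block → ℝ → Prop

namespace AlterBFTExecution

variable (P : AlterBFTExecution)

/-- A replica is honest iff it is not Byzantine. -/
def Honest (r : Fin P.n) : Prop := r ∉ P.Byz

/-- `r` votes for `B` in epoch `e` (at some time). -/
def votes (r : Fin P.n) (e : ℕ) (B : P.Block) : Prop := ∃ t, P.votesAt r e B t

/-- `B` is certified in epoch `e`: `f+1` distinct replicas sign votes for `B` in `e`. -/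
def Certified (e : ℕ) (B : P.Block) : Prop :=
  ∃ S : Finset (Fin P.n), P.f + 1 ≤ S.card ∧ ∀ r ∈ S, P.votes r e B

/-- `B` is certified in epoch `e` by time `t`. -/
def CertifiedBy (e : ℕ) (B : P.Block) (t : ℝ) : Prop :=
  ∃ S : Finset (Fin P.n), P.f + 1 ≤ S.card ∧ ∀ r ∈ S, ∃ t' ≤ t, P.votesAt r e B t'

/-- `B'` extends `B`: `B` is an ancestor of `B'` along the hash chain (including `B' = B`). -/
def Extends (B' B : P.Block) : Prop :=
  Relation.ReflTransGen (fun x y => P.parent x = some y) B' B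

/-- `r` holds some certificate (block, silence or equivocation) for epoch `e` at time `t`. -/
def AnyCert (r : Fin P.n) (e : ℕ) (t : ℝ) : Prop :=
  (∃ B, P.hasBlockCert r e B t) ∨ P.hasSilenceCert r e t ∨ P.hasEquivCert r e t

/-- `r` directly commits `B` in epoch `e` at time `t` (regular or fast commit rule). -/
def commitsDirectly (r : Fin P.n) (e : ℕ) (B : P.Block) (t : ℝ) : Prop :=
  P.commitsRegular r e B t ∨ P.commitsFast r e B t

/-- `r` is in epoch `e` at time `t`: it has started `e` and not yet started `e+1`. -/
def inEpoch (r : Fin P.n) (e : ℕ) (t : ℝ) : Prop :=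
  (∃ t0 ≤ t, P.startsEpoch r e t0) ∧ ¬ ∃ t1 ≤ t, P.startsEpoch r (e + 1) t1

/-- The rules of the AlterBFT protocol together with the hybrid synchrony
assumptions, constraining an execution. -/
structure Valid (P : AlterBFTExecution) : Prop where
  /-- blocks form a hash chain: the parent has one smaller height -/
  parent_height : ∀ B B' : P.Block, P.parent B = some B' → P.height B = P.height B' + 1
  /-- only the genesis block (height 0) has no predecessor -/
  parent_none : ∀ B : P.Block, P.parent B = none ↔ P.height B = 0
  /-- every honest replica starts epoch 0 -/
  starts_zero : ∀ r : Fin P.n, P.Honest r → ∃ t, P.startsEpoch r 0 t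
  /-- all honest replicas start epoch 0 within `ΔS` of each other -/
  start_zero_sync : ∀ r q : Fin P.n, ∀ t t' : ℝ, P.Honest r → P.Honest q →
    P.startsEpoch r 0 t → P.startsEpoch q 0 t' → |t - t'| ≤ P.ΔS
  /-- an honest replica starts an epoch at most once -/
  start_unique : ∀ r : Fin P.n, ∀ e : ℕ, ∀ t t' : ℝ, P.Honest r →
    P.startsEpoch r e t → P.startsEpoch r e t' → t = t'
  /-- an honest replica enters epoch `e+1` only after having entered epoch `e` -/
  start_succ : ∀ r : Fin P.n, ∀ e : ℕ, ∀ t : ℝ, P.Honest r →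
    P.startsEpoch r (e + 1) t → ∃ t' < t, P.startsEpoch r e t'
  /-- epoch start times strictly increase -/
  start_increasing : ∀ r : Fin P.n, ∀ e : ℕ, ∀ t t' : ℝ, P.Honest r →
    P.startsEpoch r e t → P.startsEpoch r (e + 1) t' → t < t'
  /-- an honest replica moves to epoch `e+1` either immediately upon receiving a block
  certificate for `e`, or `2ΔS` after receiving a silence or equivocation certificate for `e` -/
  advance_needs_cert : ∀ r : Fin P.n, ∀ e : ℕ, ∀ t : ℝ, P.Honest r →
    P.startsEpoch r (e + 1) t →
    (∃ t' ≤ t, ∃ B, P.hasBlockCert r e B t') ∨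
      (∃ t', t' + 2 * P.ΔS ≤ t ∧ (P.hasSilenceCert r e t' ∨ P.hasEquivCert r e t'))
  /-- once an honest replica in epoch `e` holds any certificate for `e`, it starts
  epoch `e+1` within `2ΔS` -/
  advance_from_cert : ∀ r : Fin P.n, ∀ e : ℕ, ∀ t t' : ℝ, P.Honest r →
    P.startsEpoch r e t → P.AnyCert r e t' → t ≤ t' →
    ∃ t'', P.startsEpoch r (e + 1) t'' ∧ t'' ≤ t' + 2 * P.ΔS
  /-- an honest replica still in epoch `e` that receives a block certificate for `e`
  starts epoch `e+1` immediately -/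
  advance_block_immediate : ∀ r : Fin P.n, ∀ e : ℕ, ∀ B : P.Block, ∀ t t' : ℝ,
    P.Honest r → P.startsEpoch r e t → P.hasBlockCert r e B t' → t ≤ t' →
    (¬ ∃ t'' < t', P.startsEpoch r (e + 1) t'') → P.startsEpoch r (e + 1) t'
  /-- block certificates are unforgeable: they contain `f+1` signed votes -/
  blockcert_sound : ∀ r : Fin P.n, ∀ e : ℕ, ∀ B : P.Block, ∀ t : ℝ,
    P.hasBlockCert r e B t → P.CertifiedBy e B t
  /-- silence certificates contain `f+1` signed SILENCE messages from distinct replicas -/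
  silencecert_sound : ∀ r : Fin P.n, ∀ e : ℕ, ∀ t : ℝ, P.hasSilenceCert r e t →
    ∃ S : Finset (Fin P.n), P.f + 1 ≤ S.card ∧ ∀ p ∈ S, ∃ t' ≤ t, P.sendsSilence p e t'
  /-- equivocation certificates contain two votes signed by the epoch leader
  for two different blocks -/
  equivcert_sound : ∀ r : Fin P.n, ∀ e : ℕ, ∀ t : ℝ, P.hasEquivCert r e t →
    ∃ B B' : P.Block, B ≠ B' ∧ (∃ t1 ≤ t, P.votesAt (P.leader e) e B t1) ∧
      (∃ t2 ≤ t, P.votesAt (P.leader e) e B' t2)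
  /-- votes are type S: `f+1` honest votes cast by time `t` yield a block certificate
  at every honest replica by `t + ΔS` -/
  blockcert_formation : ∀ q : Fin P.n, ∀ e : ℕ, ∀ B : P.Block, ∀ t : ℝ,
    ∀ S : Finset (Fin P.n), P.Honest q → P.f + 1 ≤ S.card →
    (∀ r ∈ S, P.Honest r ∧ ∃ t' ≤ t, P.votesAt r e B t') →
    ∃ t' ≤ t + P.ΔS, P.hasBlockCert q e B t'
  /-- SILENCE messages are type S: `f+1` honest SILENCE messages sent by time `t`
  yield a silence certificate at every honest replica by `t + ΔS` -/
  silencecert_formation : ∀ q : Fin P.n, ∀ e : ℕ, ∀ t : ℝ,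
    ∀ S : Finset (Fin P.n), P.Honest q → P.f + 1 ≤ S.card →
    (∀ r ∈ S, P.Honest r ∧ ∃ t' ≤ t, P.sendsSilence r e t') →
    ∃ t' ≤ t + P.ΔS, P.hasSilenceCert q e t'
  /-- honest voters forward the leader's signed vote (type S), so votes by two honest
  replicas for different blocks in the same epoch give every honest replica an
  equivocation certificate within `ΔS` -/
  equivcert_formation : ∀ q1 q2 r : Fin P.n, ∀ e : ℕ, ∀ B B' : P.Block, ∀ t1 t2 : ℝ,
    P.Honest q1 → P.Honest q2 → P.Honest r → B ≠ B' →
    P.votesAt q1 e B t1 → P.votesAt q2 e B' t2 →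
    ∃ t ≤ max t1 t2 + P.ΔS, P.hasEquivCert r e t
  /-- an honest replica broadcasts a block certificate it holds (QUIT-EPOCH, type S) -/
  blockcert_forward : ∀ r q : Fin P.n, ∀ e : ℕ, ∀ B : P.Block, ∀ t : ℝ,
    P.Honest r → P.Honest q → P.hasBlockCert r e B t →
    ∃ t' ≤ t + P.ΔS, P.hasBlockCert q e B t'
  /-- an honest replica broadcasts a silence or equivocation certificate it holds
  (QUIT-EPOCH, type S), so every honest replica holds some certificate within `ΔS` -/
  misbehavior_forward : ∀ r q : Fin P.n, ∀ e : ℕ, ∀ t : ℝ,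
    P.Honest r → P.Honest q → (P.hasSilenceCert r e t ∨ P.hasEquivCert r e t) →
    ∃ t' ≤ t + P.ΔS, P.AnyCert q e t'
  /-- if the `timeoutCertificate` of duration `ΔL + 4ΔS` expires without any
  certificate received, an honest replica broadcasts a SILENCE message -/
  silence_send : ∀ r : Fin P.n, ∀ e : ℕ, ∀ t : ℝ, P.Honest r → P.startsEpoch r e t →
    (¬ ∃ t' ≤ t + P.ΔL + 4 * P.ΔS, P.AnyCert r e t') →
    P.sendsSilence r e (t + P.ΔL + 4 * P.ΔS)
  /-- an honest replica sends a SILENCE message only when its `timeoutCertificate`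
  of duration `ΔL + 4ΔS` expires with no certificate received -/
  silence_only_on_timeout : ∀ r : Fin P.n, ∀ e : ℕ, ∀ ts : ℝ, P.Honest r →
    P.sendsSilence r e ts →
    ∃ t, P.startsEpoch r e t ∧ ts = t + P.ΔL + 4 * P.ΔS ∧ ¬ ∃ t' ≤ ts, P.AnyCert r e t'
  /-- an honest leader proposes a block immediately, or after its
  `timeoutEpochChange` of `2ΔS` expires -/
  leader_propose : ∀ e : ℕ, ∀ t : ℝ, P.Honest (P.leader e) →
    P.startsEpoch (P.leader e) e t →
    ∃ B tp, P.proposes (P.leader e) e B tp ∧ tp ≤ t + 2 * P.ΔS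
  /-- proposals are type L messages: delivered to honest replicas by `max t GST + ΔL` -/
  propose_delivery : ∀ p q : Fin P.n, ∀ e : ℕ, ∀ B : P.Block, ∀ t : ℝ,
    P.Honest p → P.Honest q → P.proposes p e B t →
    ∃ t' ≤ max t P.GST + P.ΔL, P.recvProposal q e B t'
  /-- an honest proposer of a non-genesis block includes a valid block certificate,
  from an earlier epoch, for the proposed block's predecessor -/
  propose_chain : ∀ r : Fin P.n, ∀ e : ℕ, ∀ B : P.Block, ∀ t : ℝ,
    P.Honest r → P.proposes r e B t → P.height B ≠ 0 →
    ∃ B', P.parent B = some B' ∧ ∃ e' < e, P.Certified e' B'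
  /-- an honest replica still in epoch `e` that receives the proposal of an honest
  leader of `e` votes for it -/
  honest_vote_on_proposal : ∀ e : ℕ, ∀ B : P.Block, ∀ tp : ℝ, ∀ q : Fin P.n, ∀ t : ℝ,
    P.Honest (P.leader e) → P.proposes (P.leader e) e B tp →
    P.Honest q → P.recvProposal q e B t → P.inEpoch q e t → P.votesAt q e B t
  /-- honest replicas vote at most once per epoch -/
  vote_once : ∀ r : Fin P.n, ∀ e : ℕ, ∀ B B' : P.Block, ∀ t t' : ℝ, P.Honest r →
    P.votesAt r e B t → P.votesAt r e B' t' → B = B'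
  /-- honest replicas vote only for blocks satisfying the validity predicate -/
  vote_valid : ∀ r : Fin P.n, ∀ e : ℕ, ∀ B : P.Block, ∀ t : ℝ, P.Honest r →
    P.votesAt r e B t → P.validBlock B
  /-- an honest replica votes only after receiving the full proposal -/
  vote_after_proposal : ∀ r : Fin P.n, ∀ e : ℕ, ∀ B : P.Block, ∀ t : ℝ, P.Honest r →
    P.votesAt r e B t → ∃ t' ≤ t, P.recvProposal r e B t'
  /-- upon voting, an honest replica forwards the full proposal (type L) to all replicas -/
  vote_forwards_proposal : ∀ r q : Fin P.n, ∀ e : ℕ, ∀ B : P.Block, ∀ t : ℝ,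
    P.Honest r → P.Honest q → P.votesAt r e B t →
    ∃ t' ≤ max t P.GST + P.ΔL, P.recvProposal q e B t'
  /-- an honest replica votes for a non-genesis block only if its predecessor is
  certified in an earlier epoch -/
  vote_parent_cert : ∀ r : Fin P.n, ∀ e : ℕ, ∀ B : P.Block, ∀ t : ℝ, P.Honest r →
    P.votesAt r e B t → P.height B ≠ 0 →
    ∃ B', P.parent B = some B' ∧ ∃ e' < e, P.Certified e' B'
  /-- voting rule: an honest replica whose `lockedBC` is `C_e(B)` votes in epoch `e'`
  only for a block whose proposal carries a block certificate at least as recent as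
  `C_e(B)`, from an epoch before `e'`, certifying a block the proposed block extends -/
  vote_rule : ∀ r : Fin P.n, ∀ e' : ℕ, ∀ B' : P.Block, ∀ t : ℝ, ∀ e : ℕ, ∀ B : P.Block,
    P.Honest r → P.votesAt r e' B' t → P.lockedBCAt r t e B →
    ∃ e'' B'', e ≤ e'' ∧ e'' < e' ∧ P.Certified e'' B'' ∧ P.Extends B' B''
  /-- an honest replica that receives a block certificate for its current epoch locks on it -/
  locks_of_blockcert : ∀ r : Fin P.n, ∀ e : ℕ, ∀ B : P.Block, ∀ t t0 : ℝ,
    P.Honest r → P.startsEpoch r e t0 → t0 ≤ t → P.hasBlockCert r e B t →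
    (¬ ∃ t' < t, P.startsEpoch r (e + 1) t') → P.locksAt r e B t
  /-- locking sets the `lockedBC` variable -/
  locks_lockedBC : ∀ r : Fin P.n, ∀ e : ℕ, ∀ B : P.Block, ∀ t : ℝ, P.Honest r →
    P.locksAt r e B t → P.lockedBCAt r t e B
  /-- `lockedBC` always stores the most recent block certificate known, so the epoch
  of `lockedBC` never decreases after locking -/
  locked_mono : ∀ r : Fin P.n, ∀ e : ℕ, ∀ B : P.Block, ∀ t : ℝ,
    ∀ e' : ℕ, ∀ B' : P.Block, ∀ t' : ℝ, P.Honest r →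
    P.locksAt r e B t → t ≤ t' → P.lockedBCAt r t' e' B' → e ≤ e'
  /-- once set, `lockedBC` is never reset to nil -/
  locked_persist : ∀ r : Fin P.n, ∀ e : ℕ, ∀ B : P.Block, ∀ t t' : ℝ, P.Honest r →
    P.locksAt r e B t → t ≤ t' → ∃ e' B', P.lockedBCAt r t' e' B'
  /-- the `lockedBC` of an honest replica is always a genuine block certificate -/
  locked_certified : ∀ r : Fin P.n, ∀ t : ℝ, ∀ e : ℕ, ∀ B : P.Block, P.Honest r →
    P.lockedBCAt r t e B → P.Certified e B
  /-- upon entering a new epoch, an honest replica broadcasts its `lockedBC`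
  (type S), so every honest replica holds that certificate within `ΔS` -/
  locked_broadcast : ∀ q p : Fin P.n, ∀ e : ℕ, ∀ tq : ℝ, ∀ e' : ℕ, ∀ B : P.Block,
    P.Honest q → P.Honest p → P.startsEpoch q e tq → P.lockedBCAt q tq e' B →
    ∃ t' ≤ tq + P.ΔS, P.hasBlockCert p e' B t'
  /-- regular commit rule: an honest replica commits `B` in epoch `e` when the
  `timeoutCommit` of `2ΔS`, started upon receiving `C_e(B)`, expires with no silence
  or equivocation certificate for `e` received -/
  regular_commit_spec : ∀ r : Fin P.n, ∀ e : ℕ, ∀ B : P.Block, ∀ t : ℝ, P.Honest r →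
    P.commitsRegular r e B t →
    (∃ t0, P.hasBlockCert r e B t0 ∧ t = t0 + 2 * P.ΔS) ∧
      ¬ ∃ t' ≤ t, (P.hasSilenceCert r e t' ∨ P.hasEquivCert r e t')
  /-- fast commit rule: an honest replica commits `B` in epoch `e` upon receiving
  signed votes for `B` in `e` from all `n` replicas, with no silence or equivocation
  certificate for `e` received -/
  fast_commit_spec : ∀ r : Fin P.n, ∀ e : ℕ, ∀ B : P.Block, ∀ t : ℝ, P.Honest r →
    P.commitsFast r e B t →
    (∀ q : Fin P.n, ∃ t' ≤ t, P.votesAt q e B t') ∧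
      ¬ ∃ t' ≤ t, (P.hasSilenceCert r e t' ∨ P.hasEquivCert r e t')
  /-- a directly committed block is committed -/
  commit_of_direct : ∀ r : Fin P.n, ∀ e : ℕ, ∀ B : P.Block, ∀ t : ℝ,
    P.commitsDirectly r e B t → P.commits r B t
  /-- committing a block also (indirectly) commits all its ancestors -/
  commit_ancestors : ∀ r : Fin P.n, ∀ B : P.Block, ∀ t : ℝ, ∀ B' : P.Block,
    P.commits r B t → P.Extends B B' → P.commits r B' t
  /-- every commit by an honest replica stems from a direct commit of a descendant -/
  commit_from_direct : ∀ r : Fin P.n, ∀ B : P.Block, ∀ t : ℝ, P.Honest r →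
    P.commits r B t → ∃ e B' t', t' ≤ t ∧ P.commitsDirectly r e B' t' ∧ P.Extends B' B
  /-- a direct commit in epoch `e` happens after entering epoch `e` -/
  commit_in_epoch : ∀ r : Fin P.n, ∀ e : ℕ, ∀ B : P.Block, ∀ t : ℝ, P.Honest r →
    P.commitsDirectly r e B t → ∃ t0 ≤ t, P.startsEpoch r e t0

end AlterBFTExecution

/-- Any certified block has an honest voter. -/
lemma certified_honest_voter (P : AlterBFTExecution) (e : ℕ) (B : P.Block)
    (h : P.Certified e B) : ∃ r, P.Honest r ∧ P.votes r e B := by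
  obtain ⟨S, hcard, hvotes⟩ := h
  by_cases hsub : S ⊆ P.Byz
  · have h2 := P.byz_le
    have := Finset.card_le_card hsub
    omega
  · obtain ⟨r, hrS, hrB⟩ := Finset.not_subset.mp hsub
    exact ⟨r, hrB, hvotes r hrS⟩

lemma certified_ancestors_aux (P : AlterBFTExecution) (hP : AlterBFTExecution.Valid P) :
    ∀ k (B0 : P.Block), P.height B0 = k → ∀ e0, P.Certified e0 B0 →
    ∀ B', P.Extends B0 B' → ∃ e' ≤ e0, P.Certified e' B' := by
  intro k
  induction k using Nat.strong_induction_on with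
  | _ k ih =>
    intro B0 hk e0 hcert B' hext
    rcases hext.cases_head with rfl | ⟨c, hc, hext'⟩
    · exact ⟨e0, le_refl _, hcert⟩
    · obtain ⟨r, hr, t, hvote⟩ := certified_honest_voter P e0 B0 hcert
      have hh0 : P.height B0 ≠ 0 := by
        intro h0
        rw [← hP.parent_none B0] at h0
        simp [h0] at hc
      obtain ⟨B'', hB'', e1, he1, hcert1⟩ := hP.vote_parent_cert r e0 B0 t hr hvote hh0
      rw [hc] at hB''; injection hB'' with hB''; subst hB''
      have hlt : P.height c < k := by
        have := hP.parent_height B0 c hc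
        omega
      obtain ⟨e', he', hcert'⟩ := ih (P.height c) (hk ▸ hlt) c rfl e1 hcert1 B' hext'
      exact ⟨e', le_of_lt (lt_of_le_of_lt he' he1), hcert'⟩

/-- Every block `B` with height `k ≠ 0` proposed by an honest replica in
an epoch `e` has as its ancestors only blocks that have been certified in some epoch
`e' < e`. -/
theorem alterbft_certified_ancestors (P : AlterBFTExecution) (hP : AlterBFTExecution.Valid P)
    (r : Fin P.n) (e : ℕ) (B : P.Block) (t : ℝ)
    (hr : P.Honest r) (hprop : P.proposes r e B t) (hh : P.height B ≠ 0) :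
    ∀ B' : P.Block, P.Extends B B' → B' ≠ B → ∃ e' < e, P.Certified e' B' := by
  intro B' hext hne
  obtain ⟨Bp, hBp, e1, he1, hcert1⟩ := hP.propose_chain r e B t hr hprop hh
  rcases hext.cases_head with rfl | ⟨c, hc, hext'⟩
  · exact absurd rfl hne
  · rw [hBp] at hc; injection hc with hc
    rw [← hc] at hext'
    obtain ⟨e', he', hcert'⟩ := certified_ancestors_aux P hP (P.height Bp) Bp rfl e1 hcert1 B' hext'
    exact ⟨e', lt_of_le_of_lt he' he1, hcert'⟩
end

section
/- (Block availability) In any execution of the AlterBFT protocol in the hybrid synchronous model with n > 2f replicas of which at most f are Byzantine, every block committed by an honest replica (together with all of its ancestor blocks) is eventually received by every honest replica; specifically, if a committed block was certified at time t, every honest replica receives the full block by time max{t, GST} + Δ_L. -/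
open Finset

/-- **Block availability.** Every block committed by an honest replica
(together with all of its ancestor blocks) is eventually received by every honest
replica; specifically, if a committed block (or one of its ancestors) was certified at
time `t`, every honest replica receives the full block by time `max t GST + ΔL`. -/
theorem alterbft_block_availability (P : AlterBFTExecution) (hP : AlterBFTExecution.Valid P)
    (r : Fin P.n) (B : P.Block) (tc : ℝ)
    (hr : P.Honest r) (hc : P.commits r B tc) :
    ∀ B' : P.Block, P.Extends B B' → ∀ (e : ℕ) (t : ℝ), P.CertifiedBy e B' t →
      ∀ q : Fin P.n, P.Honest q → ∃ t' ≤ max t P.GST + P.ΔL, P.recvProposal q e B' t' := by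
  intro B' _ e t hcert q hq
  obtain ⟨S, hcard, hvotes⟩ := hcert
  -- find an honest voter in S
  have hne : (S \ P.Byz).Nonempty := by
    rw [← Finset.card_pos]
    have h1 := Finset.le_card_sdiff P.Byz S
    have h2 := P.byz_le
    omega
  obtain ⟨p, hpS⟩ := hne
  rw [Finset.mem_sdiff] at hpS
  obtain ⟨hpS, hpH⟩ := hpS
  obtain ⟨tv, htv, hvote⟩ := hvotes p hpS
  obtain ⟨t', ht', hrecv⟩ := hP.vote_forwards_proposal p q e B' tv hpH hq hvote
  refine ⟨t', le_trans ht' ?_, hrecv⟩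
  have : max tv P.GST ≤ max t P.GST := max_le_max htv le_rfl
  linarith
end

section
/- (External validity) In any execution of the AlterBFT protocol in the hybrid synchronous model with n > 2f replicas of which at most f are Byzantine, every block committed by an honest replica satisfies the predefined valid() predicate. -/
open Finset

/-- **External validity.** Every block committed by an honest replica
satisfies the predefined `valid()` predicate. -/
theorem alterbft_external_validity (P : AlterBFTExecution) (hP : AlterBFTExecution.Valid P)
    (r : Fin P.n) (B : P.Block) (t : ℝ)
    (hr : P.Honest r) (hc : P.commits r B t) :
    P.validBlock B := by
  -- an honest voter exists in any certificate quorum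
  have honest_voter : ∀ e (B0 : P.Block), P.Certified e B0 →
      ∃ q, P.Honest q ∧ ∃ t0, P.votesAt q e B0 t0 := by
    intro e B0 ⟨S, hS, hvotes⟩
    by_cases hsub : ∀ q ∈ S, q ∈ P.Byz
    · exfalso
      have : S.card ≤ P.Byz.card := Finset.card_le_card (fun q hq => hsub q hq)
      have := P.byz_le
      omega
    · push_neg at hsub
      obtain ⟨q, hqS, hqB⟩ := hsub
      exact ⟨q, hqB, hvotes q hqS⟩
  -- a certified block is valid, and its parent is certified
  have cert_valid : ∀ e (B0 : P.Block), P.Certified e B0 → P.validBlock B0 := by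
    intro e B0 hcert
    obtain ⟨q, hq, t0, hv⟩ := honest_voter e B0 hcert
    exact hP.vote_valid q e B0 t0 hq hv
  have cert_parent : ∀ e (B0 C : P.Block), P.Certified e B0 → P.parent B0 = some C →
      ∃ e', P.Certified e' C := by
    intro e B0 C hcert hpar
    obtain ⟨q, hq, t0, hv⟩ := honest_voter e B0 hcert
    have hne : P.height B0 ≠ 0 := by
      have := hP.parent_height B0 C hpar
      omega
    obtain ⟨C', hpar', e', _, hcert'⟩ := hP.vote_parent_cert q e B0 t0 hq hv hne
    rw [hpar] at hpar'
    exact ⟨e', by rwa [Option.some_inj.mp hpar']⟩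
  -- certified ancestors of certified blocks are valid
  have anc_valid : ∀ B' B0 : P.Block, P.Extends B' B0 → (∃ e, P.Certified e B') →
      P.validBlock B0 := by
    intro B' B0 hext
    induction hext using Relation.ReflTransGen.head_induction_on with
    | refl => intro ⟨e, h⟩; exact cert_valid e B0 h
    | head hstep _ ih =>
      rename_i x c _
      intro ⟨e, hcert⟩
      obtain ⟨e', hcert'⟩ := cert_parent e x c hcert hstep
      exact ih ⟨e', hcert'⟩
  obtain ⟨e, B', t', _, hdir, hext⟩ := hP.commit_from_direct r B t hr hc
  have hcertB' : ∃ e0, P.Certified e0 B' := by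
    rcases hdir with hreg | hfast
    · obtain ⟨⟨t0, hbc, _⟩, _⟩ := hP.regular_commit_spec r e B' t' hr hreg
      obtain ⟨S, hS, hvt⟩ := hP.blockcert_sound r e B' t0 hbc
      exact ⟨e, S, hS, fun q hq => by obtain ⟨tq, _, hv⟩ := hvt q hq; exact ⟨tq, hv⟩⟩
    · obtain ⟨hall, _⟩ := hP.fast_commit_spec r e B' t' hr hfast
      refine ⟨e, Finset.univ, ?_, fun q _ => ?_⟩
      · have := P.byz_le
        have := P.n_gt
        simp only [Finset.card_univ, Fintype.card_fin]
        omega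
      · obtain ⟨tq, _, hv⟩ := hall q
        exact ⟨tq, hv⟩
  exact anc_valid B' B hext hcertB'
end

section
/- In any execution of the AlterBFT protocol in the hybrid synchronous model with n > 2f replicas of which at most f are Byzantine, if an honest replica commits block B_k via the fast commit rule in epoch e (receiving signed votes for B_k in epoch e from all n replicas before detecting misbehavior), then every honest replica voted for B_k in epoch e, and B_k is the only block certified in epoch e. -/
open Finset

/-- If an honest replica commits block `B_k` via the fast commit rule in
epoch `e` (receiving signed votes for `B_k` in epoch `e` from all `n` replicas before
detecting misbehavior), then every honest replica voted for `B_k` in epoch `e`, and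
`B_k` is the only block certified in epoch `e`. -/
theorem alterbft_fast_commit_unique (P : AlterBFTExecution) (hP : AlterBFTExecution.Valid P)
    (r : Fin P.n) (e : ℕ) (Bk : P.Block) (t : ℝ)
    (hr : P.Honest r) (hc : P.commitsFast r e Bk t) :
    (∀ q : Fin P.n, P.Honest q → P.votes q e Bk) ∧
    (∀ B' : P.Block, P.Certified e B' → B' = Bk) := by
  obtain ⟨hall, -⟩ := hP.fast_commit_spec r e Bk t hr hc
  have hvotes : ∀ q : Fin P.n, P.Honest q → P.votes q e Bk := by
    intro q _
    obtain ⟨t', -, hv⟩ := hall q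
    exact ⟨t', hv⟩
  refine ⟨hvotes, ?_⟩
  rintro B' ⟨S, hScard, hSv⟩
  -- find an honest replica in S
  have : (S \ P.Byz).Nonempty := by
    rw [Finset.sdiff_nonempty]
    intro hsub
    have := Finset.card_le_card hsub
    have hb := P.byz_le
    omega
  obtain ⟨q, hq⟩ := this
  rw [Finset.mem_sdiff] at hq
  obtain ⟨hqS, hqB⟩ := hq
  obtain ⟨t1, hv1⟩ := hSv q hqS
  obtain ⟨t2, -, hv2⟩ := hall q
  exact hP.vote_once q e B' Bk t1 t2 hqB hv1 hv2
end

section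
/- In any execution of the AlterBFT protocol in the hybrid synchronous model with n > 2f replicas of which at most f are Byzantine, if an honest replica receives a block certificate C_e(B_k) for block B_k in epoch e, then at least one honest replica received the full proposal carrying B_k and voted for it, and therefore every honest replica eventually receives the full block B_k even if it advanced using only the certificate. -/
open Finset

/-- If an honest replica receives a block certificate `C_e(B_k)` for
block `B_k` in epoch `e`, then at least one honest replica received the full proposal
carrying `B_k` and voted for it, and therefore every honest replica eventually
receives the full block `B_k`. -/
theorem alterbft_full_block_availability (P : AlterBFTExecution)
    (hP : AlterBFTExecution.Valid P)
    (r : Fin P.n) (e : ℕ) (Bk : P.Block) (t : ℝ)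
    (hr : P.Honest r) (hc : P.hasBlockCert r e Bk t) :
    (∃ p : Fin P.n, P.Honest p ∧ (∃ t1, P.recvProposal p e Bk t1) ∧ P.votes p e Bk) ∧
    (∀ q : Fin P.n, P.Honest q → ∃ t', P.recvProposal q e Bk t') := by
  obtain ⟨S, hScard, hSvote⟩ := hP.blockcert_sound r e Bk t hc
  have hex : ∃ p ∈ S, p ∉ P.Byz := by
    by_contra h
    push_neg at h
    have : S ⊆ P.Byz := fun x hx => h x hx
    have h1 := Finset.card_le_card this
    have h2 := P.byz_le
    omega
  obtain ⟨p, hpS, hpH⟩ := hex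
  obtain ⟨tv, _, hvote⟩ := hSvote p hpS
  refine ⟨⟨p, hpH, ?_, ⟨tv, hvote⟩⟩, ?_⟩
  · obtain ⟨t', _, hrecv⟩ := hP.vote_after_proposal p e Bk tv hpH hvote
    exact ⟨t', hrecv⟩
  · intro q hq
    obtain ⟨t', _, hrecv⟩ := hP.vote_forwards_proposal p q e Bk tv hpH hq hvote
    exact ⟨t', hrecv⟩
end
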